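/- arXiv:2508.15602 — 3 statements merged into one kernel-verified Lean document; each statement's English description precedes it below -/
import Mathlib

section
/- Let G be a matching-covered graph and let δ(X), δ(Y) be odd cuts with X ⊂ Y ⊂ V. If δ(Y) is a separating cut of G and δ(X) is a separating cut of G/Ȳ, then δ(X) is a separating cut of G. -/
open Classical Finset

noncomputable section

namespace PaperPM

variable {V : Type} [Fintype V] [DecidableEq V]

/-- `M` is (the edge set of) a perfect matching of `G`. -/
def IsPM (G : SimpleGraph V) (M : Finset (Sym2 V)) : Prop :=
  (M : Set (Sym2 V)) ⊆ G.edgeSet ∧ ∀ v : V, ∃! e, e ∈ M ∧ v ∈ e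

/-- `G` is matching-covered: every edge lies in a perfect matching. -/
def MatchingCovered (G : SimpleGraph V) : Prop :=
  ∀ e ∈ G.edgeSet, ∃ M, IsPM G M ∧ e ∈ M

/-- incidence (indicator) vector of a set of edges -/
def indVec (M : Finset (Sym2 V)) : Sym2 V → ℝ := fun e => if e ∈ M then 1 else 0

/-- the perfect matching polytope of `G` -/
def pmPolytope (G : SimpleGraph V) : Set (Sym2 V → ℝ) :=
  convexHull ℝ {x | ∃ M, IsPM G M ∧ x = indVec M}

/-- the cut `δ(X)`: edges of `G` with exactly one endpoint in `X` -/
def cutE (G : SimpleGraph V) (X : Set V) : Finset (Sym2 V) :=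
  Finset.univ.filter fun e =>
    e ∈ G.edgeSet ∧ ∃ u v : V, e = s(u, v) ∧ u ∈ X ∧ v ∉ X

/-- `x(A) = Σ_{a ∈ A} x_a` -/
def edgeSum (x : Sym2 V → ℝ) (A : Finset (Sym2 V)) : ℝ := ∑ e ∈ A, x e

/-- the face `P(G;C) = P(G) ∩ {x : x(δ(X)) = 1}` -/
def faceCut (G : SimpleGraph V) (X : Set V) : Set (Sym2 V → ℝ) :=
  {x ∈ pmPolytope G | edgeSum x (cutE G X) = 1}

/-- `δ(X)` is a tight cut -/
def TightCut (G : SimpleGraph V) (X : Set V) : Prop :=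
  Odd X.toFinset.card ∧ 1 < X.toFinset.card ∧ X.toFinset.card < Fintype.card V - 1 ∧
    ∀ M, IsPM G M → (M ∩ cutE G X).card = 1

/-- a brick: non-bipartite matching-covered graph without tight cuts -/
def IsBrick (G : SimpleGraph V) : Prop :=
  MatchingCovered G ∧ ¬ G.Colorable 2 ∧ ∀ X : Set V, ¬ TightCut G X

/-- dimension of a subset of `ℝ^{Sym2 V}` (affine dimension; `-1` for the empty set) -/
def polyDim (s : Set (Sym2 V → ℝ)) : ℤ :=
  if s = ∅ then -1 else (Module.finrank ℝ (vectorSpan ℝ s) : ℤ)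

/-- number of bricks in a tight cut decomposition of `G`, via the dimension
formula `dim P(G) = |E| − |V| + 1 − b(G)` of Naddef and Edmonds–Pulleyblank–Lovász. -/
def brickCount (G : SimpleGraph V) : ℤ :=
  (G.edgeFinset.card : ℤ) - Fintype.card V + 1 - polyDim (pmPolytope G)

/-- (the edge set of) a perfect matching of the contraction `G/X`, viewed inside `G`:
no edge inside `X`, exactly one cut edge (covering the contraction vertex), and every
vertex outside `X` covered exactly once. This keeps multiple parallel cut edges distinct. -/
def IsPMContr (G : SimpleGraph V) (X : Set V) (M : Finset (Sym2 V)) : Prop :=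
  (M : Set (Sym2 V)) ⊆ G.edgeSet ∧ (∀ e ∈ M, ¬ ∀ v ∈ e, v ∈ X) ∧
    (M ∩ cutE G X).card = 1 ∧ ∀ v : V, v ∉ X → ∃! e, e ∈ M ∧ v ∈ e

/-- the contraction `G/X` is matching-covered (every one of its edges, i.e. every
edge of `G` not inside `X`, lies in a perfect matching of `G/X`). -/
def MatchingCoveredContr (G : SimpleGraph V) (X : Set V) : Prop :=
  ∀ e ∈ G.edgeSet, (¬ ∀ v ∈ e, v ∈ X) → ∃ M, IsPMContr G X M ∧ e ∈ M

/-- `δ(X)` is a separating cut: odd, nontrivial, and both cut-contractions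
`G/X` and `G/X̄` are matching-covered. -/
def SeparatingCut (G : SimpleGraph V) (X : Set V) : Prop :=
  Odd X.toFinset.card ∧ 1 < X.toFinset.card ∧ X.toFinset.card < Fintype.card V - 1 ∧
    MatchingCoveredContr G X ∧ MatchingCoveredContr G Xᶜ

/-- the edges of the contraction `G/X`, as edges of `G` -/
def contrEdges (G : SimpleGraph V) (X : Set V) : Finset (Sym2 V) :=
  G.edgeFinset.filter fun e => ¬ ∀ v ∈ e, v ∈ X

/-- the perfect matching polytope of the contraction `G/X`, in the coordinates of `G` -/
def contrPolytope (G : SimpleGraph V) (X : Set V) : Set (Sym2 V → ℝ) :=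
  convexHull ℝ {x | ∃ M, IsPMContr G X M ∧ x = indVec M}

/-- number of bricks of the contraction `G/X`, via the dimension formula -/
def brickCountContr (G : SimpleGraph V) (X : Set V) : ℤ :=
  (contrEdges G X).card - ((Fintype.card V - X.toFinset.card : ℕ) + 1) + 1 -
    polyDim (contrPolytope G X)

/-- the contraction `G/X` is a Birkhoff–von Neumann graph: its perfect matching
polytope is cut out by nonnegativity, the degree equations, and `x(δ(X)) = 1`. -/
def BvNContr (G : SimpleGraph V) (X : Set V) : Prop :=
  contrPolytope G X =
    {x | (∀ e, 0 ≤ x e) ∧ (∀ e : Sym2 V, (e ∉ G.edgeSet ∨ ∀ v ∈ e, v ∈ X) → x e = 0) ∧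
      (∀ v : V, v ∉ X → edgeSum x (cutE G {v}) = 1) ∧ edgeSum x (cutE G X) = 1}

/-- the contraction `G/X` is bipartite -/
def ContrBipartite (G : SimpleGraph V) (X : Set V) : Prop :=
  ∃ (c : V → Bool) (b : Bool), ∀ u v : V, G.Adj u v → (u ∉ X ∨ v ∉ X) →
    (if u ∈ X then b else c u) ≠ (if v ∈ X then b else c v)

/-- `G` is a Birkhoff–von Neumann graph -/
def BvN (G : SimpleGraph V) : Prop :=
  pmPolytope G =
    {x | (∀ e, 0 ≤ x e) ∧ (∀ e : Sym2 V, e ∉ G.edgeSet → x e = 0) ∧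
      ∀ v : V, edgeSum x (cutE G {v}) = 1}

/-- `F` is a face of the convex set `P` -/
def IsFaceOf {E : Type*} [AddCommGroup E] [Module ℝ E] (P F : Set E) : Prop :=
  F ⊆ P ∧ Convex ℝ F ∧ ∀ x ∈ P, ∀ y ∈ P, ∀ t : ℝ, 0 < t → t < 1 →
    t • x + (1 - t) • y ∈ F → x ∈ F ∧ y ∈ F

/-- a vector is integral if all its coordinates are integers -/
def Integral (x : Sym2 V → ℝ) : Prop := ∀ e, ∃ n : ℤ, x e = (n : ℝ)

/-- the Petersen graph, as the Kneser graph `K(5,2)` -/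
def petersenGraph : SimpleGraph {s : Finset (Fin 5) // s.card = 2} where
  Adj a b := Disjoint (a : Finset (Fin 5)) (b : Finset (Fin 5))
  symm := ⟨fun _ _ h => h.symm⟩
  loopless := ⟨fun a h => by
    have h0 : (a : Finset (Fin 5)) = ∅ := by
      simpa [Finset.bot_eq_empty] using disjoint_self.mp h
    have h2 := a.2
    rw [h0] at h2
    simp at h2⟩


/-- a perfect matching of the double contraction of `G` along the two disjoint sets
`X` and `Z` (each contracted to a single vertex), viewed inside `G` -/
def IsPMContr2 (G : SimpleGraph V) (X Z : Set V) (M : Finset (Sym2 V)) : Prop :=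
  (M : Set (Sym2 V)) ⊆ G.edgeSet ∧ (∀ e ∈ M, ¬ ∀ v ∈ e, v ∈ X) ∧
    (∀ e ∈ M, ¬ ∀ v ∈ e, v ∈ Z) ∧
    (M ∩ cutE G X).card = 1 ∧ (M ∩ cutE G Z).card = 1 ∧
    ∀ v : V, v ∉ X → v ∉ Z → ∃! e, e ∈ M ∧ v ∈ e

/-- the double contraction of `G` along `X` and `Z` is matching-covered -/
def MatchingCoveredContr2 (G : SimpleGraph V) (X Z : Set V) : Prop :=
  ∀ e ∈ G.edgeSet, (¬ ∀ v ∈ e, v ∈ X) → (¬ ∀ v ∈ e, v ∈ Z) →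
    ∃ M, IsPMContr2 G X Z M ∧ e ∈ M


lemma sym2_exists_mem (e : Sym2 V) : ∃ v, v ∈ e := by
  induction e using Sym2.ind with
  | _ a b => exact ⟨a, by simp⟩

lemma mem_cutE_of (G : SimpleGraph V) (Y : Set V) (e : Sym2 V)
    (hE : e ∈ G.edgeSet) (h : ¬ ∀ v ∈ e, v ∈ Y) {v : V} (hv : v ∈ e) (hvY : v ∈ Y) :
    e ∈ cutE G Y := by
  revert hE h hv
  induction e using Sym2.ind with
  | _ a b =>
    intro hE h hv
    push_neg at h
    obtain ⟨w, hw, hwY⟩ := h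
    simp only [Sym2.mem_iff] at hv hw
    simp only [cutE, Finset.mem_filter, Finset.mem_univ, true_and]
    refine ⟨hE, ?_⟩
    rcases hv with rfl | rfl
    · rcases hw with rfl | rfl
      · exact absurd hvY hwY
      · exact ⟨v, w, rfl, hvY, hwY⟩
    · rcases hw with rfl | rfl
      · exact ⟨v, w, Sym2.eq_swap, hvY, hwY⟩
      · exact absurd hvY hwY

lemma glue_pm (G : SimpleGraph V) (X Y : Set V) (hXY : X ⊆ Y)
    {M1 M2 : Finset (Sym2 V)} {f : Sym2 V}
    (h1 : IsPMContr2 G X Yᶜ M1) (h2 : IsPMContr G Y M2)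
    (hf1 : M1 ∩ cutE G Yᶜ = {f}) (hf2 : M2 ∩ cutE G Y = {f}) :
    IsPMContr G X (M1 ∪ M2) := by
  obtain ⟨h1e, h1X, h1Yc, h1cX, h1cYc, h1cov⟩ := h1
  obtain ⟨h2e, h2Y, h2cY, h2cov⟩ := h2
  have hfM1 : f ∈ M1 := by
    have : f ∈ M1 ∩ cutE G Yᶜ := by rw [hf1]; exact Finset.mem_singleton_self f
    exact (Finset.mem_inter.mp this).1
  have hfM2 : f ∈ M2 := by
    have : f ∈ M2 ∩ cutE G Y := by rw [hf2]; exact Finset.mem_singleton_self f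
    exact (Finset.mem_inter.mp this).1
  have keyA : ∀ e ∈ M2, ∀ v, v ∈ e → v ∈ Y → e = f := by
    intro e he v hv hvY
    have hecut : e ∈ cutE G Y :=
      mem_cutE_of G Y e (h2e he) (h2Y e he) hv hvY
    have : e ∈ M2 ∩ cutE G Y := Finset.mem_inter.mpr ⟨he, hecut⟩
    rw [hf2] at this
    exact Finset.mem_singleton.mp this
  have keyB : ∀ e ∈ M1, ∀ v, v ∈ e → v ∉ Y → e = f := by
    intro e he v hv hvY
    have hecut : e ∈ cutE G Yᶜ :=
      mem_cutE_of G Yᶜ e (h1e he) (h1Yc e he) hv hvY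
    have : e ∈ M1 ∩ cutE G Yᶜ := Finset.mem_inter.mpr ⟨he, hecut⟩
    rw [hf1] at this
    exact Finset.mem_singleton.mp this
  refine ⟨?_, ?_, ?_, ?_⟩
  · intro e he
    rcases Finset.mem_union.mp he with h | h
    · exact h1e h
    · exact h2e h
  · intro e he hall
    rcases Finset.mem_union.mp he with h | h
    · exact h1X e h hall
    · exact h2Y e h (fun v hv => hXY (hall v hv))
  · have heq : (M1 ∪ M2) ∩ cutE G X = M1 ∩ cutE G X := by
      ext e
      simp only [Finset.mem_inter, Finset.mem_union]
      constructor
      · rintro ⟨h | h, hc⟩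
        · exact ⟨h, hc⟩
        · -- e ∈ M2 and e ∈ cutE G X: its X-endpoint is in Y, so e = f ∈ M1
          have := hc
          simp only [cutE, Finset.mem_filter, Finset.mem_univ, true_and] at this
          obtain ⟨hE, u, v, rfl, hu, hv⟩ := this
          have : s(u, v) = f := keyA _ h u (by simp) (hXY hu)
          exact ⟨this ▸ hfM1, hc⟩
      · rintro ⟨h, hc⟩
        exact ⟨Or.inl h, hc⟩
    rw [heq]; exact h1cX
  · intro v hvX
    by_cases hvY : v ∈ Y
    · obtain ⟨e, ⟨heM, hve⟩, huniq⟩ := h1cov v hvX (by simpa using hvY)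
      refine ⟨e, ⟨Finset.mem_union_left _ heM, hve⟩, ?_⟩
      rintro e' ⟨he', hve'⟩
      rcases Finset.mem_union.mp he' with h | h
      · exact huniq e' ⟨h, hve'⟩
      · have hef : e' = f := keyA e' h v hve' hvY
        exact huniq e' ⟨hef ▸ hfM1, hve'⟩
    · obtain ⟨e, ⟨heM, hve⟩, huniq⟩ := h2cov v hvY
      refine ⟨e, ⟨Finset.mem_union_right _ heM, hve⟩, ?_⟩
      rintro e' ⟨he', hve'⟩
      rcases Finset.mem_union.mp he' with h | h
      · have hef : e' = f := keyB e' h v hve' hvY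
        exact huniq e' ⟨hef ▸ hfM2, hve'⟩
      · exact huniq e' ⟨h, hve'⟩

/-- if `X ⊂ Y ⊂ V` are odd sets, `δ(Y)` is a separating cut of `G` and
`δ(X)` is a separating cut of `G/Ȳ`, then `δ(X)` is a separating cut of `G`.
(`δ(X)` separating in `G/Ȳ` means: `X` is odd and nontrivial in `G/Ȳ`, and both
cut-contractions `(G/Ȳ)/X` and `(G/Ȳ)/X̄ = G/X̄` are matching-covered.) -/
theorem stmt4 (G : SimpleGraph V) (hG : MatchingCovered G) (X Y : Set V)
    (hXY : X ⊂ Y) (hYV : Y ⊂ Set.univ)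
    (hY : SeparatingCut G Y)
    (hXodd : Odd X.toFinset.card) (hX1 : 1 < X.toFinset.card)
    (hX2 : X.toFinset.card < Y.toFinset.card)
    (hXcontr1 : MatchingCoveredContr2 G X Yᶜ)
    (hXcontr2 : MatchingCoveredContr G Xᶜ) :
    SeparatingCut G X := by
  obtain ⟨hYodd, hY1, hY2, hYcontr, hYccontr⟩ := hY
  refine ⟨hXodd, hX1, lt_trans hX2 hY2, ?_, hXcontr2⟩
  intro e heE heX
  by_cases hcase : ∀ v ∈ e, v ∈ Yᶜ
  · -- e lies inside Y̅ᶜ... i.e. inside the complement of Y: use G/Y first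
    have heY : ¬ ∀ v ∈ e, v ∈ Y := by
      intro h
      obtain ⟨a, ha⟩ := sym2_exists_mem e
      exact (hcase a ha) (h a ha)
    obtain ⟨M2, hM2, heM2⟩ := hYcontr e heE heY
    obtain ⟨f, hf2⟩ := Finset.card_eq_one.mp hM2.2.2.1
    have hfcut : f ∈ cutE G Y := by
      have : f ∈ M2 ∩ cutE G Y := by rw [hf2]; exact Finset.mem_singleton_self f
      exact (Finset.mem_inter.mp this).2
    simp only [cutE, Finset.mem_filter, Finset.mem_univ, true_and] at hfcut
    obtain ⟨hfE, u, v, hfeq, hu, hv⟩ := hfcut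
    have hfX : ¬ ∀ w ∈ f, w ∈ X := by
      intro h
      exact hv (hXY.1 (h v (by rw [hfeq]; simp)))
    have hfYc : ¬ ∀ w ∈ f, w ∈ Yᶜ := by
      intro h
      exact (h u (by rw [hfeq]; simp)) hu
    obtain ⟨M1, hM1, hfM1⟩ := hXcontr1 f hfE hfX hfYc
    have hf1 : M1 ∩ cutE G Yᶜ = {f} := by
      obtain ⟨g, hg⟩ := Finset.card_eq_one.mp hM1.2.2.2.2.1
      have hfin : f ∈ M1 ∩ cutE G Yᶜ := by
        refine Finset.mem_inter.mpr ⟨hfM1, ?_⟩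
        simp only [cutE, Finset.mem_filter, Finset.mem_univ, true_and]
        exact ⟨hfE, v, u, hfeq.trans Sym2.eq_swap, by simpa using hv, by simpa using hu⟩
      rw [hg] at hfin ⊢
      rw [Finset.mem_singleton.mp hfin]
    exact ⟨M1 ∪ M2, glue_pm G X Y hXY.1 hM1 hM2 hf1 hf2,
      Finset.mem_union_right _ heM2⟩
  · obtain ⟨M1, hM1, heM1⟩ := hXcontr1 e heE heX hcase
    obtain ⟨f, hf1⟩ := Finset.card_eq_one.mp hM1.2.2.2.2.1
    have hfM1 : f ∈ M1 := by
      have : f ∈ M1 ∩ cutE G Yᶜ := by rw [hf1]; exact Finset.mem_singleton_self f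
      exact (Finset.mem_inter.mp this).1
    have hfcut : f ∈ cutE G Yᶜ := by
      have : f ∈ M1 ∩ cutE G Yᶜ := by rw [hf1]; exact Finset.mem_singleton_self f
      exact (Finset.mem_inter.mp this).2
    simp only [cutE, Finset.mem_filter, Finset.mem_univ, true_and] at hfcut
    obtain ⟨hfE, u, v, hfeq, hu, hv⟩ := hfcut
    have hfY : ¬ ∀ w ∈ f, w ∈ Y := by
      intro h
      exact hu (h u (by rw [hfeq]; simp))
    obtain ⟨M2, hM2, hfM2⟩ := hYcontr f hfE hfY
    have hf2 : M2 ∩ cutE G Y = {f} := by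
      obtain ⟨g, hg⟩ := Finset.card_eq_one.mp hM2.2.2.1
      have hfin : f ∈ M2 ∩ cutE G Y := by
        refine Finset.mem_inter.mpr ⟨hfM2, ?_⟩
        simp only [cutE, Finset.mem_filter, Finset.mem_univ, true_and]
        exact ⟨hfE, v, u, hfeq.trans Sym2.eq_swap, by simpa using hv, by simpa using hu⟩
      rw [hg] at hfin ⊢
      rw [Finset.mem_singleton.mp hfin]
    exact ⟨M1 ∪ M2, glue_pm G X Y hXY.1 hM1 hM2 hf1 hf2,
      Finset.mem_union_left _ heM1⟩


end PaperPM
end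
end

section
/- Let G be a matching-covered graph with separating cuts C₁ = δ(X₁), C₂ = δ(X₂) such that X₁, X₂ cross, |X₁∩X₂| is odd, and the face F = P(G;C₁) ∩ P(G;C₂) is not contained in {x : x_e = 0} for any edge e. Then no edge of G joins X₁∖X₂ to X₂∖X₁. -/
open Classical Finset

noncomputable section

namespace PaperPM

variable {V : Type} [Fintype V] [DecidableEq V]

/-- Auxiliary: a perfect matching has an edge crossing any odd set. -/
lemma pm_exists_cut_edge (G : SimpleGraph V) (M : Finset (Sym2 V)) (hM : IsPM G M)
    (X : Set V) [Fintype ↥X] (hX : Odd X.toFinset.card) :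
    ∃ f ∈ M, ∃ a b : V, f = s(a, b) ∧ a ∈ X ∧ b ∉ X := by
  by_contra hcon
  have h' : ∀ f ∈ M, ∀ a b : V, f = s(a, b) → a ∈ X → b ∈ X := by
    intro f hf a b hfab ha
    by_contra hb
    exact hcon ⟨f, hf, a, b, hfab, ha, hb⟩
  -- the unique matching edge at each vertex
  have hg := fun v : V => (hM.2 v).choose_spec
  set g : V → Sym2 V := fun v => (hM.2 v).choose with hgdef
  have hgM : ∀ v, g v ∈ M := fun v => (hg v).1.1
  have hgmem : ∀ v, v ∈ g v := fun v => (hg v).1.2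
  have hguniq : ∀ v, ∀ e, e ∈ M → v ∈ e → e = g v := fun v e he hve => (hg v).2 e ⟨he, hve⟩
  have hmap : ∀ v ∈ X.toFinset, g v ∈ M := fun v _ => hgM v
  have heven : Even X.toFinset.card := by
    rw [Finset.card_eq_sum_card_fiberwise hmap]
    apply Finset.even_sum
    intro f hf
    induction f using Sym2.ind with
    | _ a b =>
      have hab : G.Adj a b := (SimpleGraph.mem_edgeSet G).1 (hM.1 hf)
      have hne : a ≠ b := hab.ne
      by_cases haX : a ∈ X ∧ g a = s(a, b)
      · have hbX : b ∈ X := h' _ hf a b rfl haX.1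
        have hgb : g b = s(a, b) := (hguniq b _ hf (by simp)).symm
        have : (X.toFinset.filter fun v => g v = s(a, b)) = {a, b} := by
          apply Finset.Subset.antisymm
          · intro v hv
            rw [Finset.mem_filter] at hv
            have : v ∈ g v := hgmem v
            rw [hv.2] at this
            simpa using this
          · intro v hv
            simp only [Finset.mem_insert, Finset.mem_singleton] at hv
            rcases hv with rfl | rfl
            · exact Finset.mem_filter.2 ⟨Set.mem_toFinset.2 haX.1, haX.2⟩
            · exact Finset.mem_filter.2 ⟨Set.mem_toFinset.2 hbX, hgb⟩
        rw [this, Finset.card_insert_of_notMem (by simpa using hne), Finset.card_singleton]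
        exact ⟨1, rfl⟩
      · by_cases hbX : b ∈ X ∧ g b = s(a, b)
        · have haX' : a ∈ X := h' _ hf b a (Sym2.eq_swap) hbX.1
          have hga : g a = s(a, b) := (hguniq a _ hf (by simp)).symm
          exact absurd ⟨haX', hga⟩ haX
        · have : (X.toFinset.filter fun v => g v = s(a, b)) = ∅ := by
            apply Finset.eq_empty_of_forall_notMem
            intro v hv
            rw [Finset.mem_filter, Set.mem_toFinset] at hv
            have hvmem : v ∈ g v := hgmem v
            rw [hv.2] at hvmem
            rcases Sym2.mem_iff.1 hvmem with rfl | rfl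
            · exact haX ⟨hv.1, hv.2⟩
            · exact hbX ⟨hv.1, hv.2⟩
          rw [this]
          exact Even.zero
  exact (Nat.not_even_iff_odd.2 hX) heven

/-- Auxiliary: the edge sum of an indicator vector is the cardinality of the intersection. -/
lemma edgeSum_indVec (M A : Finset (Sym2 V)) :
    edgeSum (indVec M) A = ((M ∩ A).card : ℝ) := by
  classical
  rw [edgeSum]
  rw [show M ∩ A = A.filter (fun e => e ∈ M) from by ext e; simp [and_comm]]
  rw [Finset.card_filter]
  push_cast
  exact Finset.sum_congr rfl fun e _ => by simp [indVec]

/-- if `C₁ = δ(X₁)`, `C₂ = δ(X₂)` are separating cuts of a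
matching-covered graph `G`, `X₁, X₂` cross, `|X₁∩X₂|` is odd, and the face
`P(G;C₁) ∩ P(G;C₂)` lies in no hyperplane `{x : x_e = 0}`, then no edge of `G`
joins `X₁∖X₂` to `X₂∖X₁`. -/
theorem stmt6 (G : SimpleGraph V) (hG : MatchingCovered G) (X₁ X₂ : Set V)
    (hs1 : SeparatingCut G X₁) (hs2 : SeparatingCut G X₂)
    (h1 : (X₁ ∩ X₂).Nonempty) (h2 : (X₁ \ X₂).Nonempty) (h3 : (X₂ \ X₁).Nonempty)
    (h4 : ((X₁ ∪ X₂)ᶜ : Set V).Nonempty)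
    (hodd : Odd (X₁ ∩ X₂).toFinset.card)
    (hface : ∀ e ∈ G.edgeSet, ∃ x, x ∈ faceCut G X₁ ∧ x ∈ faceCut G X₂ ∧ x e ≠ 0) :
    ∀ u ∈ X₁ \ X₂, ∀ v ∈ X₂ \ X₁, ¬ G.Adj u v := by
  intro u hu v hv hadj
  have he : s(u, v) ∈ G.edgeSet := hadj
  obtain ⟨x, hx1, hx2, hxe⟩ := hface _ he
  obtain ⟨hxP, hc1⟩ := hx1
  obtain ⟨_, hc2⟩ := hx2
  rw [pmPolytope, mem_convexHull_iff_exists_fintype] at hxP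
  obtain ⟨ι, _, w, z, hw0, hw1, hz, hxeq⟩ := hxP
  choose M hMpm hMz using hz
  have hxfun : ∀ e, x e = ∑ i, w i * indVec (M i) e := by
    intro e
    rw [← hxeq]
    simp only [Finset.sum_apply, Pi.smul_apply, smul_eq_mul]
    exact Finset.sum_congr rfl fun i _ => by rw [hMz i]
  -- edgeSum linearity over the convex combination
  have hlin : ∀ A : Finset (Sym2 V),
      edgeSum x A = ∑ i, w i * ((M i ∩ A).card : ℝ) := by
    intro A
    rw [edgeSum]
    calc ∑ e ∈ A, x e = ∑ e ∈ A, ∑ i, w i * indVec (M i) e :=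
          Finset.sum_congr rfl fun e _ => hxfun e
      _ = ∑ i, ∑ e ∈ A, w i * indVec (M i) e := Finset.sum_comm
      _ = ∑ i, w i * ((M i ∩ A).card : ℝ) := by
          refine Finset.sum_congr rfl fun i _ => ?_
          rw [← Finset.mul_sum, ← edgeSum, edgeSum_indVec]
  -- every matching meets each odd cut at least once
  have hodd1 : Odd X₁.toFinset.card := hs1.1
  have hodd2 : Odd X₂.toFinset.card := hs2.1
  have hmeet : ∀ (X : Set V), Odd X.toFinset.card → ∀ i, 1 ≤ ((M i ∩ cutE G X).card : ℝ) := by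
    intro X hX i
    obtain ⟨f, hf, a, b, hfab, ha, hb⟩ := pm_exists_cut_edge G (M i) (hMpm i) X hX
    have : f ∈ M i ∩ cutE G X := by
      refine Finset.mem_inter.2 ⟨hf, ?_⟩
      rw [cutE, Finset.mem_filter]
      exact ⟨Finset.mem_univ _, (hMpm i).1 hf, a, b, hfab, ha, hb⟩
    have : 1 ≤ (M i ∩ cutE G X).card := Finset.card_pos.2 ⟨f, this⟩
    exact_mod_cast this
  -- the positive-weight matchings meet each cut exactly once
  have hexact : ∀ (X : Set V), Odd X.toFinset.card → edgeSum x (cutE G X) = 1 →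
      ∀ i, w i ≠ 0 → ((M i ∩ cutE G X).card : ℝ) = 1 := by
    intro X hX hc i hwi
    have hsum0 : ∑ i, w i * (((M i ∩ cutE G X).card : ℝ) - 1) = 0 := by
      have := hlin (cutE G X)
      rw [hc] at this
      simp only [mul_sub, mul_one, Finset.sum_sub_distrib, ← this, hw1]
      ring
    have hterm : ∀ j ∈ Finset.univ (α := ι),
        0 ≤ w j * (((M j ∩ cutE G X).card : ℝ) - 1) := by
      intro j _
      exact mul_nonneg (hw0 j) (by linarith [hmeet X hX j])
    have := (Finset.sum_eq_zero_iff_of_nonneg hterm).1 hsum0 i (Finset.mem_univ i)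
    rcases mul_eq_zero.1 this with h | h
    · exact absurd h hwi
    · linarith
  -- find a matching containing e with positive weight
  have hxe' : x s(u, v) = ∑ i, w i * indVec (M i) s(u, v) := hxfun _
  have : ∃ i, w i ≠ 0 ∧ s(u, v) ∈ M i := by
    by_contra hcon
    push_neg at hcon
    apply hxe
    rw [hxe']
    refine Finset.sum_eq_zero fun i _ => ?_
    by_cases hwi : w i = 0
    · rw [hwi, zero_mul]
    · rw [indVec, if_neg (hcon i hwi), mul_zero]
  obtain ⟨i, hwi, heM⟩ := this
  -- e is in both cuts
  have hec1 : s(u, v) ∈ cutE G X₁ := by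
    rw [cutE, Finset.mem_filter]
    exact ⟨Finset.mem_univ _, he, u, v, rfl, hu.1, hv.2⟩
  have hec2 : s(u, v) ∈ cutE G X₂ := by
    rw [cutE, Finset.mem_filter]
    exact ⟨Finset.mem_univ _, he, v, u, Sym2.eq_swap, hv.1, hu.2⟩
  -- so M i ∩ C₁ = {e} and M i ∩ C₂ = {e}
  have hsing : ∀ (X : Set V), Odd X.toFinset.card → edgeSum x (cutE G X) = 1 →
      s(u, v) ∈ cutE G X → M i ∩ cutE G X = {s(u, v)} := by
    intro X hX hc hecut
    have hcard : (M i ∩ cutE G X).card = 1 := by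
      have := hexact X hX hc i hwi
      exact_mod_cast this
    obtain ⟨f, hf⟩ := Finset.card_eq_one.1 hcard
    have : s(u, v) ∈ M i ∩ cutE G X := Finset.mem_inter.2 ⟨heM, hecut⟩
    rw [hf] at this ⊢
    rw [Finset.mem_singleton] at this
    rw [this]
  have hs1' := hsing X₁ hodd1 hc1 hec1
  have hs2' := hsing X₂ hodd2 hc2 hec2
  -- but |X₁ ∩ X₂| is odd, so M i has an edge leaving X₁ ∩ X₂
  obtain ⟨f, hf, a, b, hfab, ha, hb⟩ :=
    pm_exists_cut_edge G (M i) (hMpm i) (X₁ ∩ X₂) hodd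
  have hfE : f ∈ G.edgeSet := (hMpm i).1 hf
  have hfin : f = s(u, v) := by
    by_cases hbX1 : b ∈ X₁
    · -- b ∉ X₂, so f crosses C₂
      have hbX2 : b ∉ X₂ := fun hbX2 => hb ⟨hbX1, hbX2⟩
      have : f ∈ M i ∩ cutE G X₂ := by
        refine Finset.mem_inter.2 ⟨hf, ?_⟩
        rw [cutE, Finset.mem_filter]
        exact ⟨Finset.mem_univ _, hfE, a, b, hfab, ha.2, hbX2⟩
      rw [hs2'] at this
      exact Finset.mem_singleton.1 this
    · have : f ∈ M i ∩ cutE G X₁ := by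
        refine Finset.mem_inter.2 ⟨hf, ?_⟩
        rw [cutE, Finset.mem_filter]
        exact ⟨Finset.mem_univ _, hfE, a, b, hfab, ha.1, hbX1⟩
      rw [hs1'] at this
      exact Finset.mem_singleton.1 this
  have haf : a ∈ f := by rw [hfab]; simp
  rw [hfin] at haf
  rcases Sym2.mem_iff.1 haf with rfl | rfl
  · exact hu.2 ha.2
  · exact hv.2 ha.1



end PaperPM
end
end

section
/- Let G be a matching-covered graph and let C₁ = δ(X₁) ⊆ C₂ = δ(X₂) ⊆ C₃ = δ(X₃) be odd cuts with X₁ ⊂ X₂ ⊂ X₃. Set F_i := P(G;C_i). Then it cannot happen simultaneously that F₂∩F₁ = F₂∩F₃, that F₂∩F₃ is not contained in {x : x_e = 0} for any edge e, and that at least one of F₂∖F₁, F₂∖F₃ is nonempty. (A cut triple cannot define a face triple.) -/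
open Classical Finset

noncomputable section

namespace PaperPM

variable {V : Type} [Fintype V] [DecidableEq V]

lemma mem_cutE_iff {G : SimpleGraph V} {Y : Set V} {a b : V} :
    s(a,b) ∈ cutE G Y ↔ s(a,b) ∈ G.edgeSet ∧ ((a ∈ Y ∧ b ∉ Y) ∨ (b ∈ Y ∧ a ∉ Y)) := by
  simp only [cutE, Finset.mem_filter, Finset.mem_univ, true_and]
  constructor
  · rintro ⟨he, u, v, huv, hu, hv⟩
    refine ⟨he, ?_⟩
    rw [Sym2.eq_iff] at huv
    rcases huv with ⟨rfl, rfl⟩ | ⟨rfl, rfl⟩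
    · exact Or.inl ⟨hu, hv⟩
    · exact Or.inr ⟨hu, hv⟩
  · rintro ⟨he, ⟨ha, hb⟩ | ⟨hb, ha⟩⟩
    · exact ⟨he, a, b, rfl, ha, hb⟩
    · exact ⟨he, b, a, Sym2.eq_swap.symm, hb, ha⟩

lemma cutE_subset_edgeSet {G : SimpleGraph V} {Y : Set V} {e : Sym2 V}
    (h : e ∈ cutE G Y) : e ∈ G.edgeSet := by
  simp only [cutE, Finset.mem_filter] at h; exact h.2.1

lemma parity {G : SimpleGraph V} {X : Set V} {M : Finset (Sym2 V)}
    (hM : IsPM G M) (hodd : Odd X.toFinset.card) :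
    Odd (M ∩ cutE G X).card := by
  classical
  set m : V → Sym2 V := fun v => (hM.2 v).choose with hm
  have hmem : ∀ v, m v ∈ M ∧ v ∈ m v := fun v => (hM.2 v).choose_spec.1
  have huniq : ∀ v e, e ∈ M → v ∈ e → e = m v := fun v e he hv =>
    (hM.2 v).choose_spec.2 e ⟨he, hv⟩
  have hmap : ∀ v ∈ X.toFinset, m v ∈ M := fun v _ => (hmem v).1
  have hcard := Finset.card_eq_sum_card_fiberwise hmap
  have hfib : ∀ e ∈ M, (X.toFinset.filter fun v => m v = e) =
      (X.toFinset.filter fun v => v ∈ e) := by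
    intro e he
    apply Finset.filter_congr
    intro v _
    constructor
    · rintro rfl; exact (hmem v).2
    · intro hv; exact (huniq v e he hv).symm
  have hfib2 : ∀ e ∈ M,
      (X.toFinset.filter fun v => v ∈ e).card % 2 = if e ∈ cutE G X then 1 else 0 := by
    intro e he
    have heG : e ∈ G.edgeSet := hM.1 he
    induction e using Sym2.ind with
    | _ a b =>
      have hab : a ≠ b := (G.mem_edgeSet.mp heG).ne
      have hf : (X.toFinset.filter fun v => v ∈ (s(a,b) : Sym2 V)) =
          (X.toFinset.filter (· = a)) ∪ (X.toFinset.filter (· = b)) := by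
        rw [← Finset.filter_or]
        apply Finset.filter_congr
        intro v _
        simp [Sym2.mem_iff]
      rw [hf, Finset.filter_eq', Finset.filter_eq']
      by_cases ha : a ∈ X <;> by_cases hb : b ∈ X <;>
        simp [mem_cutE_iff, ha, hb, heG, Finset.card_union_of_disjoint, hab, Ne.symm hab]
  have : X.toFinset.card % 2 = (M ∩ cutE G X).card % 2 := by
    rw [hcard, Finset.sum_nat_mod]
    rw [Finset.sum_congr rfl fun e he => (by rw [hfib e he, hfib2 e he] :
      (X.toFinset.filter fun v => m v = e).card % 2 = if e ∈ cutE G X then 1 else 0)]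
    rw [← Finset.card_filter, Finset.filter_mem_eq_inter]
  rw [Nat.odd_iff] at hodd ⊢
  rw [← this]; exact hodd



lemma decomp {G : SimpleGraph V} {x : Sym2 V → ℝ} (hx : x ∈ pmPolytope G) :
    ∃ (ι : Type) (t : Finset ι) (w : ι → ℝ) (Ms : ι → Finset (Sym2 V)),
      (∀ i ∈ t, 0 < w i) ∧ ∑ i ∈ t, w i = 1 ∧ (∀ i ∈ t, IsPM G (Ms i)) ∧
      x = ∑ i ∈ t, w i • indVec (Ms i) := by
  rw [pmPolytope, _root_.convexHull_eq] at hx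
  obtain ⟨ι, t, w, z, hw0, hw1, hz, hcm⟩ := hx
  classical
  set t' := t.filter (fun i => 0 < w i) with ht'
  have hsub : t' ⊆ t := Finset.filter_subset _ _
  have hzero : ∀ i ∈ t, i ∉ t' → w i = 0 := by
    intro i hi hi'
    simp only [ht', Finset.mem_filter, hi, true_and, not_lt] at hi'
    exact le_antisymm hi' (hw0 i hi)
  have hsum' : ∑ i ∈ t', w i = 1 := by
    rw [← hw1]
    exact Finset.sum_subset hsub (fun i hi hi' => hzero i hi hi')
  refine ⟨ι, t', w, fun i => if h : ∃ M, IsPM G M ∧ z i = indVec M then h.choose else ∅,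
    fun i hi => (Finset.mem_filter.mp hi).2, hsum', ?_, ?_⟩
  · intro i hi
    have h : ∃ M, IsPM G M ∧ z i = indVec M := hz i (hsub hi)
    simp only [dif_pos h]
    exact h.choose_spec.1
  · rw [← hcm, Finset.centerMass_eq_of_sum_1 _ _ hw1]
    rw [← Finset.sum_subset hsub (fun i hi hi' => by rw [hzero i hi hi', zero_smul])]
    refine Finset.sum_congr rfl fun i hi => ?_
    have h : ∃ M, IsPM G M ∧ z i = indVec M := hz i (hsub hi)
    simp only [dif_pos h]
    rw [← h.choose_spec.2]

lemma edgeSum_sum {ι : Type} (t : Finset ι) (w : ι → ℝ) (y : ι → Sym2 V → ℝ)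
    (A : Finset (Sym2 V)) :
    edgeSum (∑ i ∈ t, w i • y i) A = ∑ i ∈ t, w i * edgeSum (y i) A := by
  unfold edgeSum
  simp only [Finset.sum_apply, Pi.smul_apply, smul_eq_mul]
  rw [Finset.sum_comm]
  refine Finset.sum_congr rfl fun i _ => ?_
  rw [Finset.mul_sum]

lemma cards_one {G : SimpleGraph V} {X : Set V} (hodd : Odd X.toFinset.card)
    {ι : Type} {t : Finset ι} {w : ι → ℝ} {Ms : ι → Finset (Sym2 V)}
    (hw : ∀ i ∈ t, 0 < w i) (hw1 : ∑ i ∈ t, w i = 1)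
    (hM : ∀ i ∈ t, IsPM G (Ms i)) {x : Sym2 V → ℝ}
    (hxd : x = ∑ i ∈ t, w i • indVec (Ms i))
    (hx1 : edgeSum x (cutE G X) = 1) :
    ∀ i ∈ t, (Ms i ∩ cutE G X).card = 1 := by
  have hsum : ∑ i ∈ t, w i * ((Ms i ∩ cutE G X).card : ℝ) = 1 := by
    rw [← hx1, hxd, edgeSum_sum]
    exact Finset.sum_congr rfl fun i _ => by rw [edgeSum_indVec]
  have hzero : ∑ i ∈ t, w i * (((Ms i ∩ cutE G X).card : ℝ) - 1) = 0 := by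
    simp only [mul_sub, mul_one, Finset.sum_sub_distrib, hsum, hw1, sub_self]
  have hge : ∀ i ∈ t, (1 : ℝ) ≤ ((Ms i ∩ cutE G X).card : ℝ) := by
    intro i hi
    have := (parity (hM i hi) hodd).pos
    exact_mod_cast this
  have := (Finset.sum_eq_zero_iff_of_nonneg (fun i hi =>
    mul_nonneg (hw i hi).le (by linarith [hge i hi]))).mp hzero
  intro i hi
  have h := this i hi
  have hwi := (hw i hi).ne'
  have : ((Ms i ∩ cutE G X).card : ℝ) = 1 := by
    rcases mul_eq_zero.mp h with h' | h'
    · exact absurd h' hwi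
    · linarith
  exact_mod_cast this

lemma indVec_mem_faceCut {G : SimpleGraph V} {M : Finset (Sym2 V)} {X : Set V}
    (hM : IsPM G M) (h1 : (M ∩ cutE G X).card = 1) :
    indVec M ∈ faceCut G X :=
  ⟨subset_convexHull ℝ _ ⟨M, hM, rfl⟩, by rw [edgeSum_indVec, h1]; norm_num⟩



/-- membership in cut via inside/outside predicates -/
lemma mem_cutE_iff' {G : SimpleGraph V} {Y : Set V} {e : Sym2 V} (he : e ∈ G.edgeSet) :
    e ∈ cutE G Y ↔ ¬ (∀ v ∈ e, v ∈ Y) ∧ ¬ (∀ v ∈ e, v ∉ Y) := by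
  induction e using Sym2.ind with
  | _ a b =>
    rw [mem_cutE_iff]
    simp only [Sym2.mem_iff, forall_eq_or_imp, forall_eq, he, true_and]
    tauto

lemma paste {G : SimpleGraph V} {Y : Set V} {M M' : Finset (Sym2 V)} {f : Sym2 V}
    (hM : IsPM G M) (hM' : IsPM G M')
    (hMc : M ∩ cutE G Y = {f}) (hM'c : M' ∩ cutE G Y = {f}) :
    ∃ N, IsPM G N ∧ N ∩ cutE G Y = {f} ∧
      (∀ W : Set V, W ⊆ Y → N ∩ cutE G W = M ∩ cutE G W) ∧
      (∀ Z : Set V, Y ⊆ Z → N ∩ cutE G Z = M' ∩ cutE G Z) := by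
  classical
  have hfM : f ∈ M := (Finset.mem_inter.mp (hMc ▸ Finset.mem_singleton_self f)).1
  have hfC : f ∈ cutE G Y := (Finset.mem_inter.mp (hMc ▸ Finset.mem_singleton_self f)).2
  have hfM' : f ∈ M' := (Finset.mem_inter.mp (hM'c ▸ Finset.mem_singleton_self f)).1
  set N : Finset (Sym2 V) :=
    (M.filter fun e => ∀ v ∈ e, v ∈ Y) ∪ ({f} ∪ M'.filter fun e => ∀ v ∈ e, v ∉ Y) with hN
  -- membership characterizations
  have hmemN : ∀ e, e ∈ N ↔
      (e ∈ M ∧ ∀ v ∈ e, v ∈ Y) ∨ e = f ∨ (e ∈ M' ∧ ∀ v ∈ e, v ∉ Y) := by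
    intro e
    simp [hN, Finset.mem_union, Finset.mem_filter, Finset.mem_singleton, or_assoc]
    tauto
  -- for v ∈ Y, edges of N containing v are the edges of M containing v
  have hin : ∀ v ∈ Y, ∀ e, (e ∈ N ∧ v ∈ e) ↔ (e ∈ M ∧ v ∈ e) := by
    intro v hv e
    constructor
    · rintro ⟨heN, hve⟩
      rcases (hmemN e).mp heN with ⟨h1, _⟩ | rfl | ⟨_, h2⟩
      · exact ⟨h1, hve⟩
      · exact ⟨hfM, hve⟩
      · exact absurd hv (h2 v hve)
    · rintro ⟨heM, hve⟩
      refine ⟨(hmemN e).mpr ?_, hve⟩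
      by_cases hIn : ∀ u ∈ e, u ∈ Y
      · exact Or.inl ⟨heM, hIn⟩
      by_cases hOut : ∀ u ∈ e, u ∉ Y
      · exact absurd hv (hOut v hve)
      have : e ∈ cutE G Y := (mem_cutE_iff' (hM.1 heM)).mpr ⟨hIn, hOut⟩
      have : e ∈ M ∩ cutE G Y := Finset.mem_inter.mpr ⟨heM, this⟩
      rw [hMc, Finset.mem_singleton] at this
      exact Or.inr (Or.inl this)
  have hout : ∀ v ∉ Y, ∀ e, (e ∈ N ∧ v ∈ e) ↔ (e ∈ M' ∧ v ∈ e) := by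
    intro v hv e
    constructor
    · rintro ⟨heN, hve⟩
      rcases (hmemN e).mp heN with ⟨_, h1⟩ | rfl | ⟨h2, _⟩
      · exact absurd (h1 v hve) hv
      · exact ⟨hfM', hve⟩
      · exact ⟨h2, hve⟩
    · rintro ⟨heM', hve⟩
      refine ⟨(hmemN e).mpr ?_, hve⟩
      by_cases hOut : ∀ u ∈ e, u ∉ Y
      · exact Or.inr (Or.inr ⟨heM', hOut⟩)
      by_cases hIn : ∀ u ∈ e, u ∈ Y
      · exact absurd (hIn v hve) hv
      have : e ∈ cutE G Y := (mem_cutE_iff' (hM'.1 heM')).mpr ⟨hIn, hOut⟩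
      have : e ∈ M' ∩ cutE G Y := Finset.mem_inter.mpr ⟨heM', this⟩
      rw [hM'c, Finset.mem_singleton] at this
      exact Or.inr (Or.inl this)
  have hNedge : (N : Set (Sym2 V)) ⊆ G.edgeSet := by
    intro e heN
    rcases (hmemN e).mp heN with ⟨h, _⟩ | rfl | ⟨h, _⟩
    · exact hM.1 h
    · exact hM.1 hfM
    · exact hM'.1 h
  refine ⟨N, ⟨hNedge, ?_⟩, ?_, ?_, ?_⟩
  · intro v
    by_cases hv : v ∈ Y
    · exact (existsUnique_congr (hin v hv)).mpr (hM.2 v)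
    · exact (existsUnique_congr (hout v hv)).mpr (hM'.2 v)
  · apply Finset.Subset.antisymm
    · intro e he
      obtain ⟨heN, heC⟩ := Finset.mem_inter.mp he
      rw [Finset.mem_singleton]
      have hcut := (mem_cutE_iff' (cutE_subset_edgeSet heC)).mp heC
      rcases (hmemN e).mp heN with ⟨_, h1⟩ | rfl | ⟨_, h2⟩
      · exact absurd h1 hcut.1
      · rfl
      · exact absurd h2 hcut.2
    · intro e he
      rw [Finset.mem_singleton] at he
      rw [he]
      exact Finset.mem_inter.mpr ⟨(hmemN f).mpr (Or.inr (Or.inl rfl)), hfC⟩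
  · intro W hW
    ext e
    simp only [Finset.mem_inter, and_congr_left_iff]
    intro heC
    have hv : ∃ v ∈ e, v ∈ W := by
      have := ((mem_cutE_iff' (cutE_subset_edgeSet heC)).mp heC).2
      push_neg at this
      exact this
    obtain ⟨v, hve, hvW⟩ := hv
    have hnotout : ¬ ∀ u ∈ e, u ∉ Y := fun h => (h v hve) (hW hvW)
    constructor
    · intro heN
      rcases (hmemN e).mp heN with ⟨h, _⟩ | rfl | ⟨_, h2⟩
      · exact h
      · exact hfM
      · exact absurd h2 hnotout
    · intro heM
      by_cases hIn : ∀ u ∈ e, u ∈ Y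
      · exact (hmemN e).mpr (Or.inl ⟨heM, hIn⟩)
      · have hc : e ∈ cutE G Y := (mem_cutE_iff' (hM.1 heM)).mpr ⟨hIn, hnotout⟩
        have hf' : e ∈ M ∩ cutE G Y := Finset.mem_inter.mpr ⟨heM, hc⟩
        rw [hMc, Finset.mem_singleton] at hf'
        exact (hmemN e).mpr (Or.inr (Or.inl hf'))
  · intro Z hZ
    ext e
    simp only [Finset.mem_inter, and_congr_left_iff]
    intro heC
    have hv : ∃ v ∈ e, v ∉ Z := by
      have := ((mem_cutE_iff' (cutE_subset_edgeSet heC)).mp heC).1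
      push_neg at this
      exact this
    obtain ⟨v, hve, hvZ⟩ := hv
    have hnotin : ¬ ∀ u ∈ e, u ∈ Y := fun h => hvZ (hZ (h v hve))
    constructor
    · intro heN
      rcases (hmemN e).mp heN with ⟨_, h1⟩ | rfl | ⟨h2, _⟩
      · exact absurd h1 hnotin
      · exact hfM'
      · exact h2
    · intro heM'
      by_cases hOut : ∀ u ∈ e, u ∉ Y
      · exact (hmemN e).mpr (Or.inr (Or.inr ⟨heM', hOut⟩))
      · have hc : e ∈ cutE G Y := (mem_cutE_iff' (hM'.1 heM')).mpr ⟨hnotin, hOut⟩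
        have hf' : e ∈ M' ∩ cutE G Y := Finset.mem_inter.mpr ⟨heM', hc⟩
        rw [hM'c, Finset.mem_singleton] at hf'
        exact (hmemN e).mpr (Or.inr (Or.inl hf'))


/-- a cut triple cannot define a face triple. For odd cuts
`C_i = δ(X_i)` with `X₁ ⊂ X₂ ⊂ X₃` and `F_i := P(G;C_i)`, it cannot happen that
`F₂∩F₁ = F₂∩F₃`, that `F₂∩F₃` lies in no hyperplane `{x : x_e = 0}`, and that one of
`F₂∖F₁`, `F₂∖F₃` is nonempty. -/
theorem stmt7 (G : SimpleGraph V) (hG : MatchingCovered G) (X₁ X₂ X₃ : Set V)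
    (hodd1 : Odd X₁.toFinset.card) (hodd2 : Odd X₂.toFinset.card)
    (hodd3 : Odd X₃.toFinset.card) (h12 : X₁ ⊂ X₂) (h23 : X₂ ⊂ X₃) :
    ¬ (faceCut G X₂ ∩ faceCut G X₁ = faceCut G X₂ ∩ faceCut G X₃ ∧
        (∀ e ∈ G.edgeSet, ∃ x ∈ faceCut G X₂ ∩ faceCut G X₃, x e ≠ 0) ∧
        ((faceCut G X₂ \ faceCut G X₁).Nonempty ∨
          (faceCut G X₂ \ faceCut G X₃).Nonempty)) := by
  rintro ⟨hF, hE, hne⟩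
  have claimA : ∀ M : Finset (Sym2 V), IsPM G M → (M ∩ cutE G X₂).card = 1 →
      (M ∩ cutE G X₁).card = 1 ∧ (M ∩ cutE G X₃).card = 1 := by
    intro M hM h2
    obtain ⟨f, hf⟩ := Finset.card_eq_one.mp h2
    have hfM : f ∈ M := (Finset.mem_inter.mp (hf ▸ Finset.mem_singleton_self f)).1
    have hfC2 : f ∈ cutE G X₂ := (Finset.mem_inter.mp (hf ▸ Finset.mem_singleton_self f)).2
    have hfE : f ∈ G.edgeSet := hM.1 hfM
    obtain ⟨x, hx23, hxf⟩ := hE f hfE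
    have hx21 : x ∈ faceCut G X₂ ∩ faceCut G X₁ := by rw [hF]; exact hx23
    obtain ⟨ι, t, w, Ms, hw, hw1, hMs, hxd⟩ := decomp hx23.1.1
    have hc2 := cards_one hodd2 hw hw1 hMs hxd hx23.1.2
    have hc3 := cards_one hodd3 hw hw1 hMs hxd hx23.2.2
    have hc1 := cards_one hodd1 hw hw1 hMs hxd hx21.2.2
    have hex : ∃ i ∈ t, f ∈ Ms i := by
      by_contra h
      push_neg at h
      apply hxf
      rw [hxd]
      simp only [Finset.sum_apply, Pi.smul_apply, smul_eq_mul]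
      refine Finset.sum_eq_zero fun i hi => ?_
      rw [indVec]
      simp only [if_neg (h i hi), mul_zero]
    obtain ⟨i, hit, hfMi⟩ := hex
    have hM' : IsPM G (Ms i) := hMs i hit
    have hM'2 : Ms i ∩ cutE G X₂ = {f} := by
      have hfin : f ∈ Ms i ∩ cutE G X₂ := Finset.mem_inter.mpr ⟨hfMi, hfC2⟩
      obtain ⟨g, hg⟩ := Finset.card_eq_one.mp (hc2 i hit)
      rw [hg] at hfin ⊢
      rw [Finset.mem_singleton] at hfin
      rw [hfin]
    -- paste 1 : N agrees with M inside X₂ and with Ms i outside X₂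
    obtain ⟨N, hN, hN2, hNsub, hNsup⟩ := paste hM hM' hf hM'2
    have h1 : (M ∩ cutE G X₁).card = 1 := by
      have hm : indVec N ∈ faceCut G X₂ ∩ faceCut G X₃ :=
        ⟨indVec_mem_faceCut hN (by rw [hN2]; simp),
         indVec_mem_faceCut hN (by rw [hNsup X₃ h23.1]; exact hc3 i hit)⟩
      rw [← hF] at hm
      have h := hm.2.2
      rw [edgeSum_indVec, hNsub X₁ h12.1] at h
      exact_mod_cast h
    -- paste 2 : N' agrees with Ms i inside X₂ and with M outside X₂
    obtain ⟨N', hN', hN'2, hN'sub, hN'sup⟩ := paste hM' hM hM'2 hf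
    have h3 : (M ∩ cutE G X₃).card = 1 := by
      have hm : indVec N' ∈ faceCut G X₂ ∩ faceCut G X₁ :=
        ⟨indVec_mem_faceCut hN' (by rw [hN'2]; simp),
         indVec_mem_faceCut hN' (by rw [hN'sub X₁ h12.1]; exact hc1 i hit)⟩
      rw [hF] at hm
      have h := hm.2.2
      rw [edgeSum_indVec, hN'sup X₃ h23.1] at h
      exact_mod_cast h
    exact ⟨h1, h3⟩
  have claimB : ∀ x ∈ faceCut G X₂, x ∈ faceCut G X₁ ∧ x ∈ faceCut G X₃ := by
    intro x hx
    obtain ⟨ι, t, w, Ms, hw, hw1, hMs, hxd⟩ := decomp hx.1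
    have hc2 := cards_one hodd2 hw hw1 hMs hxd hx.2
    have key : ∀ (Y : Set V), (∀ i ∈ t, (Ms i ∩ cutE G Y).card = 1) →
        edgeSum x (cutE G Y) = 1 := by
      intro Y hY
      rw [hxd, edgeSum_sum]
      rw [Finset.sum_congr rfl (fun i hi => by
        rw [edgeSum_indVec, hY i hi, Nat.cast_one, mul_one])]
      exact hw1
    refine ⟨⟨hx.1, key X₁ fun i hi => (claimA (Ms i) (hMs i hi) (hc2 i hi)).1⟩,
      ⟨hx.1, key X₃ fun i hi => (claimA (Ms i) (hMs i hi) (hc2 i hi)).2⟩⟩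
  rcases hne with ⟨x, hx2, hx1⟩ | ⟨x, hx2, hx3⟩
  · exact hx1 (claimB x hx2).1
  · exact hx3 (claimB x hx2).2


end PaperPM
end
end
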